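/- For every monotone function f : Fin m → Fin n and all permutations s, t of Fin n, the distributive-law data satisfy f_{t ∘ s} = (f_s)_t and (t ∘ s)^f = t^{f_s} ∘ s^f; moreover for the identity permutation, f_{id} = f and id^f = id. -/

import Mathlib

/-- A permutation `σ` of `Fin m` is increasing on the fibers of `f : Fin m → Fin n` if for all
`x, y : Fin m` with `f x = f y` and `x < y` one has `σ x < σ y`. -/
def IncreasingOnFibers {m n : ℕ} (σ : Equiv.Perm (Fin m)) (f : Fin m → Fin n) : Prop :=
  ∀ x y : Fin m, f x = f y → x < y → σ x < σ y

theorem Equiv.Perm.apply_inv_self {α : Type*} (f : Equiv.Perm α) (x : α) : f (f⁻¹ x) = x :=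
  f.apply_symm_apply x

/-- A permutation preserving the fibers of `h` and increasing on them is the identity. -/
lemma perm_eq_one_of_fiber {m n : ℕ} (h : Fin m → Fin n) (τ : Equiv.Perm (Fin m))
    (hfib : ∀ x, h (τ x) = h x) (hinc : IncreasingOnFibers τ h) : τ = 1 := by
  have key : ∀ k : ℕ, ∀ x : Fin m, (x : ℕ) = k → τ x = x := by
    intro k
    induction k using Nat.strong_induction_on with
    | _ k IH =>
      intro x hx
      have IH' : ∀ y : Fin m, y < x → τ y = y := fun y hy =>
        IH (y : ℕ) (by omega) y rfl
      -- x ≤ τ x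
      have h1 : x ≤ τ x := by
        by_contra hlt
        push_neg at hlt
        have := IH' (τ x) hlt
        have := τ.injective this
        omega
      -- x ≤ τ⁻¹ x
      have h2 : x ≤ τ⁻¹ x := by
        by_contra hlt
        push_neg at hlt
        have := IH' (τ⁻¹ x) hlt
        rw [Equiv.Perm.apply_inv_self] at this
        omega
      rcases eq_or_lt_of_le h2 with he | hlt
      · conv_lhs => rw [he]
        exact Equiv.Perm.apply_inv_self τ x
      · exfalso
        have hfx : h x = h (τ⁻¹ x) := by
          have := hfib (τ⁻¹ x)
          rw [Equiv.Perm.apply_inv_self] at this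
          exact this
        have := hinc x (τ⁻¹ x) hfx hlt
        rw [Equiv.Perm.apply_inv_self] at this
        omega
  exact Equiv.ext fun x => key (x : ℕ) x rfl

/-- Uniqueness of the distributive-law pair. -/
lemma dl_unique {m n : ℕ} (f : Fin m → Fin n) (g : Fin n → Fin n)
    (hg : Function.Injective g)
    (f₁ f₂ : Fin m → Fin n) (σ₁ σ₂ : Equiv.Perm (Fin m))
    (h₁ : Monotone f₁) (h₂ : Monotone f₂)
    (i₁ : IncreasingOnFibers σ₁ f) (i₂ : IncreasingOnFibers σ₂ f)
    (e₁ : g ∘ f = f₁ ∘ ⇑σ₁) (e₂ : g ∘ f = f₂ ∘ ⇑σ₂) : f₁ = f₂ ∧ σ₁ = σ₂ := by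
  have hee : f₁ ∘ ⇑σ₁ = f₂ ∘ ⇑σ₂ := e₁ ▸ e₂
  -- f₁ = f₂ ∘ (σ₂ * σ₁⁻¹)
  have hcomp : f₁ = f₂ ∘ ⇑(σ₂ * σ₁⁻¹) := by
    funext x
    have := congrFun hee (σ₁⁻¹ x)
    simpa using this
  have hf12 : f₁ = f₂ := by
    have hmono : Monotone (f₂ ∘ ⇑(σ₂ * σ₁⁻¹)) := hcomp ▸ h₁
    have := Tuple.unique_monotone (f := f₂) (σ := σ₂ * σ₁⁻¹) (τ := 1) hmono (by simpa using h₂)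
    simp only [Equiv.Perm.coe_one, Function.comp_id] at this
    exact hcomp.trans this
  refine ⟨hf12, ?_⟩
  -- now show τ := σ₂ * σ₁⁻¹ is the identity
  set τ : Equiv.Perm (Fin m) := σ₂ * σ₁⁻¹ with hτ
  have hfib : ∀ x, f₂ (τ x) = f₂ x := by
    intro x
    have := congrFun hcomp x
    rw [hf12] at this
    exact this.symm
  have hinc : IncreasingOnFibers τ f₂ := by
    intro x y hxy hlt
    set a := σ₁⁻¹ x with ha
    set b := σ₁⁻¹ y with hb
    have hfa : g (f a) = f₁ x := by
      have := congrFun e₁ a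
      simpa [ha] using this
    have hfb : g (f b) = f₁ y := by
      have := congrFun e₂ b
      rw [← hee] at this
      simpa [hb] using this
    have hfab : f a = f b := by
      apply hg
      rw [hfa, hfb, hf12, hxy]
    have hab : a < b := by
      rcases lt_trichotomy a b with h | h | h
      · exact h
      · exfalso; rw [ha, hb] at h; have := σ₁⁻¹.injective h; omega
      · exfalso
        have := i₁ b a hfab.symm h
        rw [ha, hb, Equiv.Perm.apply_inv_self, Equiv.Perm.apply_inv_self] at this
        omega
    have := i₂ a b hfab hab
    simpa [hτ, ha, hb] using this
  have := perm_eq_one_of_fiber f₂ τ hfib hinc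
  have : σ₂ * σ₁⁻¹ = 1 := this
  calc σ₁ = (σ₂ * σ₁⁻¹) * σ₁ := by rw [this]; simp
    _ = σ₂ := by group

theorem stmt_7 (m n : ℕ) (f : Fin m → Fin n) (hf : Monotone f)
    (s t : Equiv.Perm (Fin n))
    (fs : Fin m → Fin n) (sf : Equiv.Perm (Fin m))
    (hfs : Monotone fs) (hsf : IncreasingOnFibers sf f) (heq1 : ⇑s ∘ f = fs ∘ ⇑sf)
    (fst : Fin m → Fin n) (tfs : Equiv.Perm (Fin m))
    (hfst : Monotone fst) (htfs : IncreasingOnFibers tfs fs) (heq2 : ⇑t ∘ fs = fst ∘ ⇑tfs)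
    (fts : Fin m → Fin n) (tsf : Equiv.Perm (Fin m))
    (hfts : Monotone fts) (htsf : IncreasingOnFibers tsf f)
    (heq3 : ⇑(t * s) ∘ f = fts ∘ ⇑tsf) :
    (fts = fst ∧ tsf = tfs * sf) ∧
    ∀ (f₁ : Fin m → Fin n) (s₁ : Equiv.Perm (Fin m)),
      Monotone f₁ → IncreasingOnFibers s₁ f → ⇑(1 : Equiv.Perm (Fin n)) ∘ f = f₁ ∘ ⇑s₁ →
      f₁ = f ∧ s₁ = 1 := by
  constructor
  · -- apply uniqueness with g = t*s, comparing (fts, tsf) and (fst, tfs*sf)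
    have hinc : IncreasingOnFibers (tfs * sf) f := by
      intro x y hxy hlt
      have h1 : sf x < sf y := hsf x y hxy hlt
      have h2 : fs (sf x) = fs (sf y) := by
        have hx := congrFun heq1 x
        have hy := congrFun heq1 y
        simp only [Function.comp_apply] at hx hy
        rw [← hx, ← hy, hxy]
      exact htfs (sf x) (sf y) h2 h1
    have heq : ⇑(t * s) ∘ f = fst ∘ ⇑(tfs * sf) := by
      funext x
      have h1 := congrFun heq1 x
      have h2 := congrFun heq2 (sf x)
      simp only [Function.comp_apply] at h1 h2 ⊢
      simp only [Equiv.Perm.coe_mul, Function.comp_apply]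
      rw [h1, h2]
    exact dl_unique f ⇑(t * s) (t * s).injective fts fst tsf (tfs * sf)
      hfts hfst htsf hinc heq3 heq
  · intro f₁ s₁ hm hi he
    have h1inc : IncreasingOnFibers (1 : Equiv.Perm (Fin m)) f := by
      intro x y _ hlt
      simpa using hlt
    exact dl_unique f id Function.injective_id f₁ f s₁ 1 hm hf hi h1inc
      (by simpa using he) (by simp)
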